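/- Uniqueness of walks from color sequences: let G be a directed multigraph whose edges are colored by a set I and which satisfies the following three conditions: (i) no vertex has two distinct incoming edges of the same color, and no vertex has two distinct outgoing edges of the same color; (ii) for every color i ∈ I there are at most two edges of color i; (iii) whenever a and b are distinct vertices that each have an incoming edge of some common color i, there is no color j such that both a and b have an outgoing edge of color j, and dually, whenever a and b are distinct vertices that each have an outgoing edge of some common color i, there is no color j such that both a and b have an incoming edge of color j. Then for every k ≥ 2, any sequence (c_0, c_1, …, c_{k−1}) of colors is the color sequence of at most one directed walk of length k in G; in particular, if some directed walk in G has this color sequence, that walk is unique. (These three conditions hold for the Kirillov–Reshetikhin crystal graphs B^{1,1} of all classical affine types, so a path of length k ≥ 2 in B^{1,1} determines a unique walk.) -/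
import Mathlib


/-- A directed multigraph with `I`-colored edges: a vertex set `V`, an edge set
`E`, source and target maps, and a color map. -/
structure ColoredDigraph (V E I : Type*) where
  src : E → V
  tgt : E → V
  color : E → I

namespace ColoredDigraph

/-- `e 0, e 1, …, e (k-1)` is a directed walk of length `k`:
consecutive edges are composable. -/
def IsWalk {V E I : Type*} (G : ColoredDigraph V E I) (k : ℕ) (e : ℕ → E) : Prop :=
  ∀ t : ℕ, t + 1 < k → G.tgt (e t) = G.src (e (t + 1))

/-- Uniqueness of walks from color sequences.  If a colored
directed multigraph satisfies (i) no vertex has two distinct incoming (resp.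
outgoing) edges of the same color, (ii) each color has at most two edges, and
(iii) distinct vertices with incoming edges of a common color have no common
color among their outgoing edges (and dually), then for `k ≥ 2` a sequence of
colors is the color sequence of at most one directed walk of length `k`. -/
theorem walk_unique_from_colors {V E I : Type*} (G : ColoredDigraph V E I)
    (h_in : ∀ e e' : E, G.color e = G.color e' → G.tgt e = G.tgt e' → e = e')
    (h_out : ∀ e e' : E, G.color e = G.color e' → G.src e = G.src e' → e = e')
    (h_two : ∀ (i : I) (e₁ e₂ e₃ : E),
      G.color e₁ = i → G.color e₂ = i → G.color e₃ = i →
      e₁ = e₂ ∨ e₁ = e₃ ∨ e₂ = e₃)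
    (h_sep : ∀ a b : V, a ≠ b →
      (∃ i : I, (∃ e, G.tgt e = a ∧ G.color e = i) ∧ (∃ e, G.tgt e = b ∧ G.color e = i)) →
      ¬ ∃ j : I, (∃ f, G.src f = a ∧ G.color f = j) ∧ (∃ f, G.src f = b ∧ G.color f = j))
    (h_sep' : ∀ a b : V, a ≠ b →
      (∃ i : I, (∃ e, G.src e = a ∧ G.color e = i) ∧ (∃ e, G.src e = b ∧ G.color e = i)) →
      ¬ ∃ j : I, (∃ f, G.tgt f = a ∧ G.color f = j) ∧ (∃ f, G.tgt f = b ∧ G.color f = j))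
    (k : ℕ) (hk : 2 ≤ k) (e₁ e₂ : ℕ → E)
    (hw₁ : G.IsWalk k e₁) (hw₂ : G.IsWalk k e₂)
    (hc : ∀ t : ℕ, t < k → G.color (e₁ t) = G.color (e₂ t)) :
    ∀ t : ℕ, t < k → e₁ t = e₂ t := by
  have main : ∀ t : ℕ, t + 1 < k → e₁ t = e₂ t := by
    intro t ht
    by_contra hne
    have hc1 := hc t (Nat.lt_of_succ_lt ht)
    have htgt : G.tgt (e₁ t) ≠ G.tgt (e₂ t) := fun h => hne (h_in _ _ hc1 h)
    exact h_sep _ _ htgt ⟨_, ⟨e₁ t, rfl, rfl⟩, ⟨e₂ t, rfl, hc1.symm⟩⟩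
      ⟨G.color (e₁ (t+1)), ⟨e₁ (t+1), (hw₁ t ht).symm, rfl⟩,
       ⟨e₂ (t+1), (hw₂ t ht).symm, (hc (t+1) ht).symm⟩⟩
  intro t ht
  by_cases h : t + 1 < k
  · exact main t h
  · have h2 : k - 2 + 1 < k := by omega
    have hprev := main (k-2) h2
    have heq : k - 2 + 1 = t := by omega
    have hsrc : G.src (e₁ t) = G.src (e₂ t) := by
      have a := hw₁ (k-2) h2
      have b := hw₂ (k-2) h2
      rw [heq] at a b
      rw [← a, ← b, hprev]
    exact h_out _ _ (hc t ht) hsrc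

end ColoredDigraph
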